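/- Let V₁,…,Vₙ be isometries with orthogonal ranges on K whose joint wandering subspace is cyclic, i.e., K = closure of span{V_α q : α ∈ 𝔽ₙ⁺, q ∈ range(I − ΣᵢVᵢVᵢ*)}. If E ⊆ K is any cyclic subspace (K = ⋁_{α} V_α E), then dim(range(I − ΣᵢVᵢVᵢ*)) ≤ dim E. -/

import Mathlib

open ContinuousLinearMap
open scoped InnerProductSpace

/-- For a word `α` in the free semigroup on `n` generators, `wordProd V α` is the
corresponding product `V_{i₁} ∘ ⋯ ∘ V_{i_k}` (the empty word gives the identity). -/
noncomputable def wordProd {H : Type*} [NormedAddCommGroup H] [NormedSpace ℂ H]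
    {n : ℕ} (V : Fin n → H →L[ℂ] H) (α : List (Fin n)) : H →L[ℂ] H :=
  (α.map V).prod

/-- A closed subspace `M` is cyclic for `V₁,…,Vₙ` if the closed span of all `V_α M`
is the whole space. -/
def IsCyclicSubspace {H : Type*} [NormedAddCommGroup H] [InnerProductSpace ℂ H]
    {n : ℕ} (V : Fin n → H →L[ℂ] H) (M : Submodule ℂ H) : Prop :=
  (Submodule.span ℂ (⋃ α : List (Fin n), (wordProd V α) '' (M : Set H))).topologicalClosure = ⊤

open Cardinal in
lemma mk_le_continuum_of_sep {X : Type*} [MetricSpace X]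
    [TopologicalSpace.SeparableSpace X] : #X ≤ 𝔠 := by
  obtain ⟨D, Dcount, Ddense⟩ := TopologicalSpace.exists_countable_dense X
  haveI : Countable D := Dcount.to_subtype
  have hch : ∀ x : X, ∀ m : ℕ, ∃ d : D, dist x (d : X) < 1 / (m + 1) := by
    intro x m
    obtain ⟨d, hd1, hd2⟩ := Metric.dense_iff.mp Ddense x (1 / (m + 1)) (by positivity)
    exact ⟨⟨d, hd2⟩, Metric.mem_ball'.mp hd1⟩
  choose f hf using hch
  have finj : Function.Injective f := by
    intro x y hxy
    apply eq_of_forall_dist_le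
    intro ε hε
    obtain ⟨m, hm⟩ := exists_nat_one_div_lt (show (0:ℝ) < ε / 2 by linarith)
    have h1 := hf x m
    have h2 := hf y m
    rw [hxy] at h1
    calc dist x y ≤ dist x (f y m : X) + dist y (f y m : X) := dist_triangle_right ..
      _ ≤ ε / 2 + ε / 2 := add_le_add (h1.trans hm).le (h2.trans hm).le
      _ = ε := by ring
  have h1 : #X ≤ #(ℕ → D) := mk_le_of_injective finj
  refine h1.trans ?_
  have harr : #(ℕ → D) = (#D) ^ (ℵ₀ : Cardinal) := by
    simpa using (mk_arrow ℕ D)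
  rw [harr]
  calc (#D) ^ (ℵ₀ : Cardinal) ≤ (ℵ₀ : Cardinal) ^ (ℵ₀ : Cardinal) :=
        power_le_power_right (mk_le_aleph0)
    _ = 𝔠 := aleph0_power_aleph0

open scoped InnerProductSpace

open Cardinal in
lemma continuum_le_rank_of_infdim {E : Type*} [NormedAddCommGroup E] [InnerProductSpace ℂ E]
    [CompleteSpace E] (h : ¬ FiniteDimensional ℂ E) :
    𝔠 ≤ Module.rank ℂ E := by
  classical
  -- a linearly independent sequence
  haveI binf : Infinite (Module.Basis.ofVectorSpaceIndex ℂ E) := by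
    rw [Set.infinite_coe_iff]
    intro hfin
    haveI := hfin.to_subtype
    haveI := Fintype.ofFinite (Module.Basis.ofVectorSpaceIndex ℂ E)
    exact h (Module.Finite.of_basis (Module.Basis.ofVectorSpace ℂ E))
  set emb := Infinite.natEmbedding (Module.Basis.ofVectorSpaceIndex ℂ E)
  have hli : LinearIndependent ℂ (fun m : ℕ => Module.Basis.ofVectorSpace ℂ E (emb m)) :=
    (Module.Basis.ofVectorSpace ℂ E).linearIndependent.comp emb emb.injective
  set e : ℕ → E := InnerProductSpace.gramSchmidtNormed ℂ (fun m : ℕ => Module.Basis.ofVectorSpace ℂ E (emb m))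
  have he : Orthonormal ℂ e := InnerProductSpace.gramSchmidtNormed_orthonormal hli
  -- the vectors v t
  have hsum : ∀ t : Set.Ioo (0:ℝ) (1/2), Summable (fun m : ℕ => ((t : ℝ) : ℂ) ^ m • e m) := by
    intro t
    apply Summable.of_norm
    have hnorm : ∀ m : ℕ, ‖((t : ℝ) : ℂ) ^ m • e m‖ = (t : ℝ) ^ m := by
      intro m
      rw [norm_smul, he.1 m, mul_one, norm_pow, Complex.norm_real,
        Real.norm_of_nonneg t.2.1.le]
    rw [funext hnorm]
    exact summable_geometric_of_lt_one t.2.1.le (t.2.2.trans (by norm_num))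
  set v : Set.Ioo (0:ℝ) (1/2) → E := fun t => ∑' m : ℕ, ((t : ℝ) : ℂ) ^ m • e m
  have hinner : ∀ (t : Set.Ioo (0:ℝ) (1/2)) (m : ℕ), ⟪e m, v t⟫_ℂ = ((t : ℝ) : ℂ) ^ m := by
    intro t m
    have := (innerSL ℂ (e m)).map_tsum (hsum t)
    simp only [innerSL_apply_apply] at this
    rw [show (⟪e m, v t⟫_ℂ) = innerSL ℂ (e m) (v t) from rfl, (innerSL ℂ (e m)).map_tsum (hsum t)]
    have : ∀ k : ℕ, innerSL ℂ (e m) (((t : ℝ) : ℂ) ^ k • e k)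
        = if k = m then ((t : ℝ) : ℂ) ^ k else 0 := by
      intro k
      rw [innerSL_apply_apply, inner_smul_right, orthonormal_iff_ite.mp he m k]
      rcases eq_or_ne k m with hkm | hkm
      · simp [hkm]
      · simp [hkm, Ne.symm hkm]
    rw [tsum_congr this, tsum_eq_single m (fun b hb => if_neg hb)]
    simp
  have hindep : LinearIndependent ℂ v := by
    rw [linearIndependent_iff']
    intro s g hsum0 i hi
    -- inner with e m gives power sums zero
    have hps : ∀ m : ℕ, ∑ j ∈ s, g j * ((j : ℝ) : ℂ) ^ m = 0 := by
      intro m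
      have := congrArg (fun w => ⟪e m, w⟫_ℂ) hsum0
      simp only [inner_sum, inner_smul_right, inner_zero_right] at this
      rw [← this]
      refine Finset.sum_congr rfl fun j _ => ?_
      rw [hinner j m]
    -- Vandermonde
    set k := s.card
    set σ : Fin k ≃ s := s.equivFin.symm
    have hF : Function.Injective (fun j : Fin k => (((σ j : Set.Ioo (0:ℝ) (1/2)) : ℝ) : ℂ)) := by
      intro a b hab
      apply σ.injective
      apply Subtype.ext
      apply Subtype.ext
      have : ((((σ a : Set.Ioo (0:ℝ) (1/2)) : ℝ)) : ℂ) = (((σ b : Set.Ioo (0:ℝ) (1/2)) : ℝ) : ℂ) := hab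
      exact_mod_cast this
    have hzero := Matrix.eq_zero_of_forall_pow_sum_mul_pow_eq_zero
      (f := fun j : Fin k => (((σ j : Set.Ioo (0:ℝ) (1/2)) : ℝ) : ℂ))
      (v := fun j : Fin k => g (σ j)) hF ?_
    · have := congrFun hzero (σ.symm ⟨i, hi⟩)
      simpa using this
    · intro m
      have h2 := (Equiv.sum_comp σ (fun i : s =>
        g i * ((((i : Set.Ioo (0:ℝ) (1/2)) : ℝ)) : ℂ) ^ (m : ℕ))).trans
        ((Finset.sum_coe_sort s _).trans (hps (m : ℕ)))
      simpa using h2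
  have := hindep.cardinal_lift_le_rank
  rw [Cardinal.mk_Ioo_real (by norm_num : (0:ℝ) < 1/2)] at this
  rw [Cardinal.lift_continuum] at this
  exact this.trans (by simp)

theorem wandering_subspace_minimal_cyclic
    {K : Type*} [NormedAddCommGroup K] [InnerProductSpace ℂ K] [CompleteSpace K]
    [TopologicalSpace.SeparableSpace K]
    {n : ℕ} (V : Fin n → K →L[ℂ] K)
    (hiso : ∀ i j : Fin n, adjoint (V i) ∘L V j = if i = j then 1 else 0)
    (hwandering_cyclic :
      IsCyclicSubspace V (LinearMap.range (1 - ∑ i, V i ∘L adjoint (V i)).toLinearMap))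
    (E : Submodule ℂ K) [CompleteSpace E]
    (hE : IsCyclicSubspace V E) :
    Module.rank ℂ (LinearMap.range (1 - ∑ i, V i ∘L adjoint (V i)).toLinearMap)
      ≤ Module.rank ℂ E := by
  classical
  set Q : K →L[ℂ] K := 1 - ∑ i, V i ∘L adjoint (V i) with hQdef
  set L : Submodule ℂ K := LinearMap.range Q.toLinearMap with hLdef
  by_cases hfd : FiniteDimensional ℂ E
  case neg =>
    -- infinite-dimensional case via cardinality bounds
    have h1 : Module.rank ℂ L ≤ Cardinal.mk L := rank_le_card ℂ L
    have h2 : Cardinal.mk L ≤ Cardinal.mk K := Cardinal.mk_le_of_injective Subtype.val_injective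
    have h3 : Cardinal.mk K ≤ Cardinal.continuum := mk_le_continuum_of_sep
    have h4 : Cardinal.continuum ≤ Module.rank ℂ E := continuum_le_rank_of_infdim hfd
    exact ((h1.trans h2).trans h3).trans h4
  case pos =>
    -- pointwise computation lemmas
    have hij : ∀ (i j : Fin n) (y : K), adjoint (V i) (V j y) = if i = j then y else 0 := by
      intro i j y
      have := DFunLike.congr_fun (hiso i j) y
      simpa [apply_ite (fun (T : K →L[ℂ] K) => T y)] using this
    have hQapp : ∀ x : K, Q x = x - ∑ i, V i (adjoint (V i) x) := by
      intro x
      simp [hQdef, ContinuousLinearMap.sub_apply, ContinuousLinearMap.sum_apply]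
    have hkerQ : ∀ (i : Fin n) (x : K), adjoint (V i) (Q x) = 0 := by
      intro i x
      rw [hQapp, map_sub, map_sum]
      have : ∀ j ∈ Finset.univ, adjoint (V i) (V j (adjoint (V j) x))
          = if i = j then adjoint (V j) x else 0 := fun j _ => hij i j _
      rw [Finset.sum_congr rfl this, Finset.sum_ite_eq]
      simp
    have hLker : ∀ q ∈ L, ∀ i, adjoint (V i) q = 0 := by
      rintro q ⟨x, rfl⟩ i
      exact hkerQ i x
    -- density: any vector in L orthogonal to E is zero
    have horth : ∀ q : K, (∀ i, adjoint (V i) q = 0) → (∀ e ∈ E, ⟪q, e⟫_ℂ = 0) → q = 0 := by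
      intro q hq hqE
      have hdense : Dense ((Submodule.span ℂ
          (⋃ α : List (Fin n), (wordProd V α) '' (E : Set K))) : Set K) :=
        Submodule.dense_iff_topologicalClosure_eq_top.mpr hE
      have hspan : ∀ v ∈ Submodule.span ℂ
          (⋃ α : List (Fin n), (wordProd V α) '' (E : Set K)), ⟪q, v⟫_ℂ = 0 := by
        intro v hv
        induction hv using Submodule.span_induction with
        | mem y hy =>
            obtain ⟨_, ⟨α, rfl⟩, e, he, rfl⟩ := hy
            cases α with
            | nil =>
                simpa [wordProd] using hqE e he
            | cons i β =>
                have : wordProd V (i :: β) e = V i (wordProd V β e) := by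
                  simp [wordProd, List.prod_cons, ContinuousLinearMap.mul_apply]
                rw [this, ← ContinuousLinearMap.adjoint_inner_left, hq i, inner_zero_left]
        | zero => simp
        | add y z _ _ hy hz => rw [inner_add_right, hy, hz, add_zero]
        | smul c y _ hy => rw [inner_smul_right, hy, mul_zero]
      exact hdense.eq_zero_of_inner_left ℂ fun v hv => hspan v hv
    -- the compressed subspace
    set M : Submodule ℂ K := Submodule.map Q.toLinearMap E with hMdef
    have hME : Module.rank ℂ M ≤ Module.rank ℂ E := rank_map_le Q.toLinearMap E
    have hMsubL : M ≤ L := by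
      rintro y ⟨e, -, rfl⟩
      exact ⟨e, rfl⟩
    haveI : FiniteDimensional ℂ M := Module.Finite.map E Q.toLinearMap
    have hLsubM : L ≤ M := by
      intro q hq
      set m : K := (M.orthogonalProjectionOnto q : K) with hm
      have hmM : (M.orthogonalProjectionOnto q : K) ∈ M := (M.orthogonalProjectionOnto q).2
      have hq' : q - m ∈ L := L.sub_mem hq (hMsubL hmM)
      have hq'o : q - m ∈ Mᗮ := Submodule.sub_starProjection_mem_orthogonal (K := M) q
      have hker' : ∀ i, adjoint (V i) (q - m) = 0 := hLker _ hq'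
      have hzero : q - m = 0 := by
        refine horth _ hker' fun e he => ?_
        have h1 : ⟪Q e, q - m⟫_ℂ = 0 :=
          (Submodule.mem_orthogonal M (q - m)).mp hq'o (Q e) ⟨e, he, rfl⟩
        have h2 : ⟪Q e, q - m⟫_ℂ = ⟪e, q - m⟫_ℂ := by
          rw [hQapp e, inner_sub_left, sum_inner]
          have : ∀ j ∈ Finset.univ, ⟪V j (adjoint (V j) e), q - m⟫_ℂ = 0 := by
            intro j _
            rw [← ContinuousLinearMap.adjoint_inner_right, hker' j, inner_zero_right]
          rw [Finset.sum_congr rfl this]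
          simp [inner_sub_right]
        rw [← inner_eq_zero_symm]
        rw [← h2, h1]
      have : q = m := by rwa [sub_eq_zero] at hzero
      rw [this]
      exact hmM
    calc Module.rank ℂ L ≤ Module.rank ℂ M := Submodule.rank_mono hLsubM
      _ ≤ Module.rank ℂ E := hME
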